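/- Let r ∈ (1,2) and q ∈ L²(ℝ₊,(1+x)^r dx). Then for every z ∈ ℂ, ω(q,z) := ∫₀^∞ |q(x)|/√(1+|x-z|) dx satisfies ω(q,z) ≤ C ‖q‖_{L²((1+x)^r dx)} · (log(2+|z|)/(2+|z|))^{1/2}, with C depending only on r. -/

import Mathlib

open MeasureTheory Set Real

lemma int_inv_shift {c a b : ℝ} (h : 0 < c + a) (hab : a ≤ b) :
    ∫ x in Ioc a b, (c + x)⁻¹ = Real.log (c + b) - Real.log (c + a) := by
  have hb : 0 < c + b := by linarith
  rw [← intervalIntegral.integral_of_le hab]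
  rw [intervalIntegral.integral_comp_add_left (fun u => u⁻¹) c]
  rw [integral_inv (by
    intro h0
    rcases h0 with h0
    rw [Set.mem_uIcc] at h0
    rcases h0 with ⟨h1,_⟩|⟨h1,h2⟩ <;> linarith)]
  rw [Real.log_div hb.ne' h.ne']

lemma int_inv_rev {t : ℝ} (ht : 0 ≤ t) :
    ∫ x in Ioc 0 t, (1 + t - x)⁻¹ = Real.log (1 + t) := by
  rw [← intervalIntegral.integral_of_le ht]
  rw [intervalIntegral.integral_comp_sub_left (fun u => u⁻¹) (1 + t)]
  simp only [add_sub_cancel_right, sub_zero]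
  rw [integral_inv (by
    intro h0
    rw [Set.mem_uIcc] at h0
    rcases h0 with ⟨h1,h2⟩|⟨h1,h2⟩ <;> linarith)]
  rw [div_one]

lemma int_inv_sq_Ioi {M : ℝ} (hM : 0 < M) :
    ∫ x in Ioi M, x ^ (-2:ℝ) = M⁻¹ := by
  rw [integral_Ioi_rpow_of_lt (by norm_num) hM]
  rw [show (-2:ℝ) + 1 = -1 by norm_num, Real.rpow_neg_one]
  field_simp

lemma base_integrable {r : ℝ} (hr1 : 1 < r) :
    IntegrableOn (fun x : ℝ => (1+x) ^ (-r)) (Ioi 0) := by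
  have hcont : ContinuousOn (fun x : ℝ => (1+x) ^ (-r)) (Ici 0) := by
    apply ContinuousOn.rpow_const
    · exact (continuous_const.add continuous_id).continuousOn
    · intro x hx
      exact Or.inl (by simp only [Set.mem_Ici] at hx; positivity)
  have h1 : IntegrableOn (fun x : ℝ => (1+x) ^ (-r)) (Ioc 0 1) :=
    (hcont.mono ((Icc_subset_Ici_self : Icc (0:ℝ) 1 ⊆ Ici 0))).integrableOn_Icc.mono_set
      Ioc_subset_Icc_self
  have h2 : IntegrableOn (fun x : ℝ => (1+x) ^ (-r)) (Ioi 1) := by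
    refine Integrable.mono (integrableOn_Ioi_rpow_of_lt (by linarith : -r < -1) one_pos)
      ((hcont.mono (Ioi_subset_Ici (by norm_num))).aestronglyMeasurable measurableSet_Ioi) ?_
    refine (ae_restrict_iff' measurableSet_Ioi).2 (ae_of_all _ fun x hx => ?_)
    simp only [Set.mem_Ioi] at hx
    have hx0 : (0:ℝ) < x := by linarith
    rw [Real.norm_of_nonneg (by positivity), Real.norm_of_nonneg (by positivity)]
    exact Real.rpow_le_rpow_of_nonpos hx0 (by linarith) (by linarith)
  have := h1.union h2
  rwa [Set.Ioc_union_Ioi_eq_Ioi (by norm_num : (0:ℝ) ≤ 1)] at this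

lemma kernel_cont (r : ℝ) (z : ℂ) :
    ContinuousOn (fun x : ℝ => (1+x) ^ (-r) * (1 + ‖(x:ℂ) - z‖)⁻¹) (Ici 0) := by
  apply ContinuousOn.mul
  · apply ContinuousOn.rpow_const
    · exact (continuous_const.add continuous_id).continuousOn
    · intro x hx
      exact Or.inl (by simp only [Set.mem_Ici] at hx; positivity)
  · apply ContinuousOn.inv₀
    · apply Continuous.continuousOn
      exact continuous_const.add (continuous_norm.comp
        ((Complex.continuous_ofReal).sub continuous_const))
    · intro x _
      positivity

lemma kernel_integrableOn {r : ℝ} (hr1 : 1 < r) (z : ℂ) :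
    IntegrableOn (fun x : ℝ => (1+x) ^ (-r) * (1 + ‖(x:ℂ) - z‖)⁻¹) (Ioi 0) := by
  refine Integrable.mono (base_integrable hr1)
    (((kernel_cont r z).mono (Ioi_subset_Ici le_rfl)).aestronglyMeasurable measurableSet_Ioi) ?_
  refine (ae_restrict_iff' measurableSet_Ioi).2 (ae_of_all _ fun x hx => ?_)
  simp only [Set.mem_Ioi] at hx
  have h1 : (0:ℝ) < 1 + x := by linarith
  have h2 : (0:ℝ) ≤ (1+x) ^ (-r) := by positivity
  rw [Real.norm_of_nonneg (by positivity), Real.norm_of_nonneg h2]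
  have : (1 + ‖(x:ℂ) - z‖)⁻¹ ≤ 1 := by
    rw [inv_le_one_iff₀]; right; have := norm_nonneg ((x:ℂ) - z); linarith
  calc (1+x) ^ (-r) * (1 + ‖(x:ℂ) - z‖)⁻¹ ≤ (1+x) ^ (-r) * 1 := by
        apply mul_le_mul_of_nonneg_left this h2
    _ = (1+x) ^ (-r) := mul_one _

lemma inv_add_trick {a b s : ℝ} (ha : 0 < a) (hb : 0 < b) (hs : 0 < s) (h : s ≤ a + b) :
    a⁻¹ * b⁻¹ ≤ (2/s) * (a⁻¹ + b⁻¹) := by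
  have hab : (0:ℝ) < a * b := mul_pos ha hb
  have e : (2/s) * (a⁻¹ + b⁻¹) = (2*(a+b))/(a*b*s) := by field_simp; ring
  rw [← mul_inv, e, inv_eq_one_div, div_le_div_iff₀ hab (by positivity)]
  nlinarith

set_option maxHeartbeats 1000000 in
lemma kernel_bound {r : ℝ} (hr1 : 1 < r) (z : ℂ) :
    ∫ x in Ioi (0:ℝ), (1+x) ^ (-r) * (1 + ‖(x:ℂ) - z‖)⁻¹
      ≤ 16 * (Real.log (2 + ‖z‖) / (2 + ‖z‖)) := by
  set t := ‖z‖ with htdef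
  have ht : 0 ≤ t := norm_nonneg z
  set K := fun x : ℝ => (1+x) ^ (-r) * (1 + ‖(x:ℂ) - z‖)⁻¹ with hKdef
  set M := 1 + 2*t with hMdef
  have htM : t ≤ M := by simp only [hMdef]; linarith
  have hM0 : (0:ℝ) ≤ M := by simp only [hMdef]; linarith
  have h2t : (0:ℝ) < 2 + t := by linarith
  have hKint : IntegrableOn K (Ioi 0) := kernel_integrableOn hr1 z
  have habs : ∀ x : ℝ, 0 ≤ x → (1 + ‖(x:ℂ) - z‖)⁻¹ ≤ (1 + |x - t|)⁻¹ := by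
    intro x hx
    have h1 : |x - t| ≤ ‖(x:ℂ) - z‖ := by
      have h2 := abs_norm_sub_norm_le (x:ℂ) z
      simpa [Complex.norm_real, Real.norm_eq_abs, abs_of_nonneg hx] using h2
    have habs0 : (0:ℝ) ≤ |x - t| := abs_nonneg _
    apply inv_anti₀ (by linarith) (by linarith)
  have hrpow : ∀ x : ℝ, 0 ≤ x → (1+x) ^ (-r) ≤ (1+x)⁻¹ := by
    intro x hx
    calc (1+x) ^ (-r) ≤ (1+x) ^ (-1:ℝ) :=
          Real.rpow_le_rpow_of_exponent_le (by linarith) (by linarith)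
      _ = (1+x)⁻¹ := Real.rpow_neg_one _
  -- log facts
  have hl2 : Real.log 2 ≤ Real.log (2 + t) := Real.log_le_log (by norm_num) (by linarith)
  have hlog2 : (0.6931:ℝ) < Real.log 2 := by
    have := Real.log_two_gt_d9; linarith
  have hlogpos : (0:ℝ) < Real.log (2 + t) := by linarith
  -- subsets
  have hsub1 : Ioc (0:ℝ) t ⊆ Ioi 0 := Ioc_subset_Ioi_self
  have hsub2 : Ioc t M ⊆ Ioi (0:ℝ) := fun x hx => mem_Ioi.2 (lt_of_le_of_lt ht hx.1)
  have hsub3 : Ioi M ⊆ Ioi (0:ℝ) := Ioi_subset_Ioi hM0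
  -- split
  have hsplit : ∫ x in Ioi (0:ℝ), K x
      = ((∫ x in Ioc 0 t, K x) + (∫ x in Ioc t M, K x)) + (∫ x in Ioi M, K x) := by
    have e1 : Ioc (0:ℝ) t ∪ Ioc t M = Ioc 0 M := Ioc_union_Ioc_eq_Ioc ht htM
    have e2 : Ioc (0:ℝ) M ∪ Ioi M = Ioi 0 := Ioc_union_Ioi_eq_Ioi hM0
    rw [← e2, setIntegral_union Ioc_disjoint_Ioi_same measurableSet_Ioi
      (hKint.mono_set (by rw [← e2]; exact subset_union_left))
      (hKint.mono_set (by rw [← e2]; exact subset_union_right)), ← e1,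
      setIntegral_union (Ioc_disjoint_Ioc_of_le le_rfl) measurableSet_Ioc
      (hKint.mono_set hsub1) (hKint.mono_set hsub2)]
  -- piece 1
  have hc1a : ContinuousOn (fun x : ℝ => (1+x)⁻¹) (Icc 0 t) :=
    ContinuousOn.inv₀ ((continuous_const.add continuous_id).continuousOn)
      (fun x hx => by have := hx.1; positivity)
  have hc1b : ContinuousOn (fun x : ℝ => (1+t-x)⁻¹) (Icc 0 t) :=
    ContinuousOn.inv₀ ((continuous_const.sub continuous_id).continuousOn)
      (fun x hx => by have := hx.2; have h9 : (0:ℝ) < 1 + t - x := by linarith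
                      positivity)
  have hi1a : IntegrableOn (fun x : ℝ => (1+x)⁻¹) (Ioc 0 t) :=
    hc1a.integrableOn_Icc.mono_set Ioc_subset_Icc_self
  have hi1b : IntegrableOn (fun x : ℝ => (1+t-x)⁻¹) (Ioc 0 t) :=
    hc1b.integrableOn_Icc.mono_set Ioc_subset_Icc_self
  have hp1 : ∫ x in Ioc 0 t, K x
      ≤ ∫ x in Ioc 0 t, (2/(2+t)) * ((1+x)⁻¹ + (1+t-x)⁻¹) := by
    apply setIntegral_mono_on (hKint.mono_set hsub1)
      (((hi1a.add hi1b)).const_mul _) measurableSet_Ioc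
    intro x hx
    obtain ⟨hx0, hxt⟩ := hx
    have h1x : (0:ℝ) < 1 + x := by linarith
    have h1b : (0:ℝ) < 1 + t - x := by linarith
    calc K x ≤ (1+x) ^ (-r) * (1 + |x - t|)⁻¹ := by
          apply mul_le_mul_of_nonneg_left (habs x hx0.le) (by positivity)
      _ = (1+x) ^ (-r) * (1+t-x)⁻¹ := by
          rw [abs_of_nonpos (by linarith), show 1 + -(x-t) = 1+t-x by ring]
      _ ≤ (1+x)⁻¹ * (1+t-x)⁻¹ := by
          apply mul_le_mul_of_nonneg_right (hrpow x hx0.le) (by positivity)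
      _ ≤ (2/(2+t)) * ((1+x)⁻¹ + (1+t-x)⁻¹) :=
          inv_add_trick h1x h1b h2t (by linarith)
  have hv1a : ∫ x in Ioc 0 t, (1+x)⁻¹ = Real.log (1+t) - Real.log (1+0) :=
    int_inv_shift (by norm_num) ht
  have hv1b : ∫ x in Ioc 0 t, (1+t-x)⁻¹ = Real.log (1+t) := int_inv_rev ht
  have hlt : Real.log (1+t) ≤ Real.log (2+t) := Real.log_le_log (by linarith) (by linarith)
  have hltpos : 0 ≤ Real.log (1+t) := Real.log_nonneg (by linarith)
  have hc1 : ∫ x in Ioc 0 t, (2/(2+t)) * ((1+x)⁻¹ + (1+t-x)⁻¹)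
      ≤ 4 * (Real.log (2+t) / (2+t)) := by
    rw [integral_const_mul, integral_add hi1a hi1b, hv1a, hv1b]
    rw [show (1:ℝ)+0 = 1 by norm_num, Real.log_one, div_mul_eq_mul_div,
      show (4:ℝ)*(Real.log (2+t)/(2+t)) = 4*Real.log (2+t)/(2+t) from (mul_div_assoc _ _ _).symm]
    rw [div_le_div_iff_of_pos_right h2t]
    nlinarith
  -- piece 2
  have hc2a : ContinuousOn (fun x : ℝ => (1+x)⁻¹) (Icc t M) :=
    ContinuousOn.inv₀ ((continuous_const.add continuous_id).continuousOn)
      (fun x hx => by have := hx.1; have h9 : (0:ℝ) < 1 + x := by linarith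
                      positivity)
  have hc2b : ContinuousOn (fun x : ℝ => (1-t+x)⁻¹) (Icc t M) :=
    ContinuousOn.inv₀ ((continuous_const.add continuous_id).continuousOn)
      (fun x hx => by have := hx.1; have h9 : (0:ℝ) < 1 - t + x := by linarith
                      positivity)
  have hi2a : IntegrableOn (fun x : ℝ => (1+x)⁻¹) (Ioc t M) :=
    hc2a.integrableOn_Icc.mono_set Ioc_subset_Icc_self
  have hi2b : IntegrableOn (fun x : ℝ => (1-t+x)⁻¹) (Ioc t M) :=
    hc2b.integrableOn_Icc.mono_set Ioc_subset_Icc_self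
  have hp2 : ∫ x in Ioc t M, K x
      ≤ ∫ x in Ioc t M, (2/(2+t)) * ((1+x)⁻¹ + (1-t+x)⁻¹) := by
    apply setIntegral_mono_on (hKint.mono_set hsub2)
      (((hi2a.add hi2b)).const_mul _) measurableSet_Ioc
    intro x hx
    obtain ⟨hxt, hxM⟩ := hx
    have hx0 : (0:ℝ) < x := lt_of_le_of_lt ht hxt
    have h1x : (0:ℝ) < 1 + x := by linarith
    have h1b : (0:ℝ) < 1 - t + x := by linarith
    calc K x ≤ (1+x) ^ (-r) * (1 + |x - t|)⁻¹ := by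
          apply mul_le_mul_of_nonneg_left (habs x hx0.le) (by positivity)
      _ = (1+x) ^ (-r) * (1-t+x)⁻¹ := by
          rw [abs_of_nonneg (by linarith), show 1 + (x-t) = 1-t+x by ring]
      _ ≤ (1+x)⁻¹ * (1-t+x)⁻¹ := by
          apply mul_le_mul_of_nonneg_right (hrpow x hx0.le) (by positivity)
      _ ≤ (2/(2+t)) * ((1+x)⁻¹ + (1-t+x)⁻¹) :=
          inv_add_trick h1x h1b h2t (by linarith)
  have hv2a : ∫ x in Ioc t M, (1+x)⁻¹ = Real.log (1+M) - Real.log (1+t) :=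
    int_inv_shift (by linarith) htM
  have hv2b : ∫ x in Ioc t M, (1-t+x)⁻¹ = Real.log (1-t+M) - Real.log (1-t+t) :=
    int_inv_shift (by rw [show (1:ℝ)-t+t = 1 by ring]; norm_num) htM
  have hMval : Real.log (1+M) - Real.log (1+t) ≤ Real.log (2+t) := by
    have h1 : (1:ℝ)+M = 2+2*t := by rw [hMdef]; ring
    have h2 : Real.log (2+2*t) ≤ Real.log ((2+t)*(1+t)) :=
      Real.log_le_log (by linarith) (by nlinarith)
    rw [h1]
    rw [Real.log_mul (by linarith) (by linarith)] at h2
    linarith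
  have hc2 : ∫ x in Ioc t M, (2/(2+t)) * ((1+x)⁻¹ + (1-t+x)⁻¹)
      ≤ 4 * (Real.log (2+t) / (2+t)) := by
    rw [integral_const_mul, integral_add hi2a hi2b, hv2a, hv2b]
    rw [show (1:ℝ)-t+t = 1 by ring, show (1:ℝ)-t+M = 2+t by rw [hMdef]; ring, Real.log_one,
      div_mul_eq_mul_div,
      show (4:ℝ)*(Real.log (2+t)/(2+t)) = 4*Real.log (2+t)/(2+t) from (mul_div_assoc _ _ _).symm]
    rw [div_le_div_iff_of_pos_right h2t]
    nlinarith
  -- piece 3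
  have hMpos : (0:ℝ) < M := by rw [hMdef]; linarith
  have hi3 : IntegrableOn (fun x : ℝ => 2 * x ^ (-2:ℝ)) (Ioi M) :=
    (integrableOn_Ioi_rpow_of_lt (by norm_num) hMpos).const_mul 2
  have hp3 : ∫ x in Ioi M, K x ≤ ∫ x in Ioi M, 2 * x ^ (-2:ℝ) := by
    apply setIntegral_mono_on (hKint.mono_set hsub3) hi3 measurableSet_Ioi
    intro x hx
    simp only [mem_Ioi] at hx
    have hxM : M < x := hx
    have hx0 : (0:ℝ) < x := lt_of_le_of_lt hM0 hxM
    have hxt : t ≤ x := by rw [hMdef] at hxM; linarith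
    have h1x : (0:ℝ) < 1 + x := by linarith
    have h1b : (0:ℝ) < 1 - t + x := by rw [hMdef] at hxM; linarith
    have hx2 : x ^ (-2:ℝ) = x⁻¹ * x⁻¹ := by
      rw [show (-2:ℝ) = (-1) + (-1) by norm_num, Real.rpow_add hx0, Real.rpow_neg_one]
    calc K x ≤ (1+x) ^ (-r) * (1 + |x - t|)⁻¹ := by
          apply mul_le_mul_of_nonneg_left (habs x hx0.le) (by positivity)
      _ = (1+x) ^ (-r) * (1-t+x)⁻¹ := by
          rw [abs_of_nonneg (by linarith), show 1 + (x-t) = 1-t+x by ring]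
      _ ≤ (1+x)⁻¹ * (1-t+x)⁻¹ := by
          apply mul_le_mul_of_nonneg_right (hrpow x hx0.le) (by positivity)
      _ ≤ x⁻¹ * (2 * x⁻¹) := by
          apply mul_le_mul
          · exact inv_anti₀ hx0 (by linarith)
          · rw [show (2:ℝ) * x⁻¹ = (x/2)⁻¹ by rw [inv_div]; ring]
            apply inv_anti₀ (by linarith)
            rw [hMdef] at hxM; linarith
          · positivity
          · positivity
      _ = 2 * x ^ (-2:ℝ) := by rw [hx2]; ring
  have hc3 : ∫ x in Ioi M, 2 * x ^ (-2:ℝ) ≤ 8 * (Real.log (2+t) / (2+t)) := by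
    rw [integral_const_mul, int_inv_sq_Ioi hMpos]
    rw [show (8:ℝ) * (Real.log (2+t)/(2+t)) = (8*Real.log (2+t))/(2+t) from
      (mul_div_assoc _ _ _).symm, inv_eq_one_div, mul_one_div,
      div_le_div_iff₀ hMpos h2t]
    rw [hMdef]
    nlinarith
  calc ∫ x in Ioi (0:ℝ), K x
      = ((∫ x in Ioc 0 t, K x) + (∫ x in Ioc t M, K x)) + (∫ x in Ioi M, K x) := hsplit
    _ ≤ (4 * (Real.log (2+t) / (2+t)) + 4 * (Real.log (2+t) / (2+t)))
        + 8 * (Real.log (2+t) / (2+t)) := by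
        gcongr <;> [exact le_trans hp1 hc1; exact le_trans hp2 hc2; exact le_trans hp3 hc3]
    _ = 16 * (Real.log (2+t) / (2+t)) := by ring

set_option maxHeartbeats 1000000 in
theorem omega_bound_r_between_one_two (r : ℝ) (hr1 : 1 < r) (hr2 : r < 2) :
    ∃ C > 0, ∀ (q : ℝ → ℝ) (z : ℂ),
      AEStronglyMeasurable q (volume.restrict (Ioi (0:ℝ))) →
      IntegrableOn (fun x => q x ^ 2 * (1 + x) ^ r) (Ioi 0) →
      ∫ x in Ioi (0:ℝ), |q x| / Real.sqrt (1 + ‖(x:ℂ) - z‖) ≤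
        C * (∫ x in Ioi (0:ℝ), q x ^ 2 * (1 + x) ^ r) ^ ((1:ℝ)/2) *
          (Real.log (2 + ‖z‖) / (2 + ‖z‖)) ^ ((1:ℝ)/2) := by
  refine ⟨4, by norm_num, fun q z hq hA => ?_⟩
  set t := ‖z‖ with htdef
  have ht : 0 ≤ t := norm_nonneg z
  have h2t : (0:ℝ) < 2 + t := by linarith
  set L := Real.log (2 + t) / (2 + t) with hLdef
  have hLnn : 0 ≤ L := div_nonneg (Real.log_nonneg (by linarith)) h2t.le
  set f := fun x : ℝ => |q x| * (1+x) ^ (r/2) with hfdef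
  set g := fun x : ℝ => (1+x) ^ (-(r/2)) * (Real.sqrt (1 + ‖(x:ℂ) - z‖))⁻¹
    with hgdef
  -- continuity facts
  have hcrpow : ∀ s : ℝ, ContinuousOn (fun x : ℝ => (1+x) ^ s) (Ici 0) := by
    intro s
    apply ContinuousOn.rpow_const
    · exact (continuous_const.add continuous_id).continuousOn
    · intro x hx
      exact Or.inl (by simp only [Set.mem_Ici] at hx; positivity)
  have hcs : Continuous fun x : ℝ => (Real.sqrt (1 + ‖(x:ℂ) - z‖))⁻¹ := by
    apply Continuous.inv₀
    · exact Real.continuous_sqrt.comp (continuous_const.add (continuous_norm.comp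
        ((Complex.continuous_ofReal).sub continuous_const)))
    · intro x
      have h9 : (0:ℝ) < 1 + ‖(x:ℂ) - z‖ := by positivity
      exact (Real.sqrt_pos.2 h9).ne'
  -- measurability
  have hqa : AEStronglyMeasurable (fun x => |q x|) (volume.restrict (Ioi (0:ℝ))) := by
    simpa only [Real.norm_eq_abs] using hq.norm
  have hfm : AEStronglyMeasurable f (volume.restrict (Ioi (0:ℝ))) :=
    hqa.mul (((hcrpow (r/2)).mono (Ioi_subset_Ici le_rfl)).aestronglyMeasurable
      measurableSet_Ioi)
  have hgm : AEStronglyMeasurable g (volume.restrict (Ioi (0:ℝ))) :=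
    (((hcrpow (-(r/2))).mono (Ioi_subset_Ici le_rfl)).aestronglyMeasurable
      measurableSet_Ioi).mul hcs.aestronglyMeasurable
  -- pointwise squares
  have hfsq : ∀ x : ℝ, x ∈ Ioi (0:ℝ) → f x ^ 2 = q x ^ 2 * (1+x) ^ r := by
    intro x hx
    simp only [Set.mem_Ioi] at hx
    have h1x : (0:ℝ) < 1 + x := by linarith
    have e2 : ((1+x) ^ (r/2)) ^ (2:ℕ) = (1+x) ^ r := by
      rw [← Real.rpow_natCast ((1+x) ^ (r/2)) 2, ← Real.rpow_mul h1x.le]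
      norm_num
    rw [hfdef]
    simp only
    rw [mul_pow, sq_abs, e2]
  have hgsq : ∀ x : ℝ, x ∈ Ioi (0:ℝ) →
      g x ^ 2 = (1+x) ^ (-r) * (1 + ‖(x:ℂ) - z‖)⁻¹ := by
    intro x hx
    simp only [Set.mem_Ioi] at hx
    have h1x : (0:ℝ) < 1 + x := by linarith
    have h9 : (0:ℝ) ≤ 1 + ‖(x:ℂ) - z‖ := by positivity
    have e2 : ((1+x) ^ (-(r/2))) ^ (2:ℕ) = (1+x) ^ (-r) := by
      rw [← Real.rpow_natCast ((1+x) ^ (-(r/2))) 2, ← Real.rpow_mul h1x.le]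
      norm_num
    rw [hgdef]
    simp only
    rw [mul_pow, e2, inv_pow, Real.sq_sqrt h9]
  -- Memℒp
  have hf2 : MemLp f 2 (volume.restrict (Ioi (0:ℝ))) := by
    rw [memLp_two_iff_integrable_sq hfm]
    exact hA.congr ((ae_restrict_iff' measurableSet_Ioi).2
      (ae_of_all _ fun x hx => (hfsq x hx).symm))
  have hg2 : MemLp g 2 (volume.restrict (Ioi (0:ℝ))) := by
    rw [memLp_two_iff_integrable_sq hgm]
    exact (kernel_integrableOn hr1 z).congr ((ae_restrict_iff' measurableSet_Ioi).2
      (ae_of_all _ fun x hx => (hgsq x hx).symm))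
  -- nonnegativity a.e.
  have hfnn : 0 ≤ᵐ[volume.restrict (Ioi (0:ℝ))] f :=
    (ae_restrict_iff' measurableSet_Ioi).2 (ae_of_all _ fun x hx => by
      simp only [Set.mem_Ioi] at hx
      exact mul_nonneg (abs_nonneg _) (Real.rpow_nonneg (by linarith) _))
  have hgnn : 0 ≤ᵐ[volume.restrict (Ioi (0:ℝ))] g :=
    (ae_restrict_iff' measurableSet_Ioi).2 (ae_of_all _ fun x hx => by
      simp only [Set.mem_Ioi] at hx
      exact mul_nonneg (Real.rpow_nonneg (by linarith) _)
        (inv_nonneg.2 (Real.sqrt_nonneg _)))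
  have hconj : Real.HolderConjugate 2 2 := Real.HolderConjugate.two_two
  have hHolder := integral_mul_le_Lp_mul_Lq_of_nonneg hconj hfnn hgnn
    (by rwa [ENNReal.ofReal_ofNat]) (by rwa [ENNReal.ofReal_ofNat])
  -- rewrite pieces
  have hL1 : ∫ x in Ioi (0:ℝ), |q x| / Real.sqrt (1 + ‖(x:ℂ) - z‖)
      = ∫ x in Ioi (0:ℝ), f x * g x := by
    apply setIntegral_congr_fun measurableSet_Ioi
    intro x hx
    simp only [Set.mem_Ioi] at hx
    have h1x : (0:ℝ) < 1 + x := by linarith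
    have e1 : (1+x) ^ (r/2) * (1+x) ^ (-(r/2)) = 1 := by
      rw [← Real.rpow_add h1x, add_neg_cancel, Real.rpow_zero]
    rw [hfdef, hgdef]
    simp only
    rw [div_eq_mul_inv]
    calc |q x| * (Real.sqrt (1 + ‖(x:ℂ) - z‖))⁻¹
        = |q x| * ((1+x) ^ (r/2) * (1+x) ^ (-(r/2)))
          * (Real.sqrt (1 + ‖(x:ℂ) - z‖))⁻¹ := by rw [e1, mul_one]
      _ = |q x| * (1+x) ^ (r/2) * ((1+x) ^ (-(r/2))
          * (Real.sqrt (1 + ‖(x:ℂ) - z‖))⁻¹) := by ring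
  have hrpow2 : ∀ y : ℝ, y ^ (2:ℝ) = y ^ (2:ℕ) := by
    intro y
    rw [show (2:ℝ) = ((2:ℕ):ℝ) by norm_num, Real.rpow_natCast]
  have hA2 : ∫ x in Ioi (0:ℝ), f x ^ (2:ℝ) = ∫ x in Ioi (0:ℝ), q x ^ 2 * (1+x) ^ r := by
    apply setIntegral_congr_fun measurableSet_Ioi
    intro x hx
    show f x ^ (2:ℝ) = q x ^ 2 * (1+x) ^ r
    rw [hrpow2, hfsq x hx]
  have hB2 : ∫ x in Ioi (0:ℝ), g x ^ (2:ℝ)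
      = ∫ x in Ioi (0:ℝ), (1+x) ^ (-r) * (1 + ‖(x:ℂ) - z‖)⁻¹ := by
    apply setIntegral_congr_fun measurableSet_Ioi
    intro x hx
    show g x ^ (2:ℝ) = (1+x) ^ (-r) * (1 + ‖(x:ℂ) - z‖)⁻¹
    rw [hrpow2, hgsq x hx]
  have hAnn : 0 ≤ ∫ x in Ioi (0:ℝ), q x ^ 2 * (1+x) ^ r := by
    apply setIntegral_nonneg measurableSet_Ioi
    intro x hx
    simp only [Set.mem_Ioi] at hx
    have h1x : (0:ℝ) < 1 + x := by linarith
    positivity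
  have hBnn : 0 ≤ ∫ x in Ioi (0:ℝ), (1+x) ^ (-r) * (1 + ‖(x:ℂ) - z‖)⁻¹ := by
    apply setIntegral_nonneg measurableSet_Ioi
    intro x hx
    simp only [Set.mem_Ioi] at hx
    have h1x : (0:ℝ) < 1 + x := by linarith
    positivity
  have hBle : ∫ x in Ioi (0:ℝ), (1+x) ^ (-r) * (1 + ‖(x:ℂ) - z‖)⁻¹ ≤ 16 * L :=
    kernel_bound hr1 z
  have h16 : (16:ℝ) ^ ((1:ℝ)/2) = 4 := by
    rw [show (16:ℝ) = 4 ^ (2:ℕ) by norm_num, ← Real.rpow_natCast 4 2,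
      ← Real.rpow_mul (by norm_num)]
    norm_num
  calc ∫ x in Ioi (0:ℝ), |q x| / Real.sqrt (1 + ‖(x:ℂ) - z‖)
      = ∫ x in Ioi (0:ℝ), f x * g x := hL1
    _ ≤ (∫ x in Ioi (0:ℝ), f x ^ (2:ℝ)) ^ ((1:ℝ)/2)
        * (∫ x in Ioi (0:ℝ), g x ^ (2:ℝ)) ^ ((1:ℝ)/2) := hHolder
    _ = (∫ x in Ioi (0:ℝ), q x ^ 2 * (1+x) ^ r) ^ ((1:ℝ)/2)
        * (∫ x in Ioi (0:ℝ), (1+x) ^ (-r) * (1 + ‖(x:ℂ) - z‖)⁻¹) ^ ((1:ℝ)/2) := by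
        rw [hA2, hB2]
    _ ≤ (∫ x in Ioi (0:ℝ), q x ^ 2 * (1+x) ^ r) ^ ((1:ℝ)/2) * (16 * L) ^ ((1:ℝ)/2) := by
        apply mul_le_mul_of_nonneg_left (Real.rpow_le_rpow hBnn hBle (by norm_num))
          (Real.rpow_nonneg hAnn _)
    _ = 4 * (∫ x in Ioi (0:ℝ), q x ^ 2 * (1+x) ^ r) ^ ((1:ℝ)/2) * L ^ ((1:ℝ)/2) := by
        rw [Real.mul_rpow (by norm_num) hLnn, h16]
        ring
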